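/- arXiv:2404.06610 — 2 statements merged into one kernel-verified Lean document; each statement's English description precedes it below -/
import Mathlib

section
/- Let C be a cochain complex of modules over a commutative ring with an ascending exhaustive filtration F_n C (n ∈ ℕ) such that F_0 C = 0 and for every n > 1 the complex gr_n C = F_n C / F_{n-1}C is acyclic. Then the inclusion F_1 C ↪ C is a quasi-isomorphism. (No splitting hypothesis on the filtration is needed.) -/
open CategoryTheory

variable {R : Type} [CommRing R]

/-- A family of submodules of the components of a cochain complex is stable under the
differential. -/
def dStable (C : CochainComplex (ModuleCat R) ℤ) (F : ∀ i : ℤ, Submodule R (C.X i)) : Prop :=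
  ∀ (i j : ℤ), ∀ x ∈ F i, C.d i j x ∈ F j

/-- The subcomplex of a cochain complex determined by a `d`-stable family of
submodules. -/
noncomputable def subcomplex (C : CochainComplex (ModuleCat R) ℤ)
    (F : ∀ i : ℤ, Submodule R (C.X i)) (hF : dStable C F) :
    CochainComplex (ModuleCat R) ℤ :=
  CochainComplex.of (fun i => ModuleCat.of R (F i))
    (fun i => ModuleCat.ofHom ((C.d i (i + 1)).hom.restrict (fun x hx => hF i (i + 1) x hx)))
    (fun i => by
      ext x
      have h := congrArg (fun f => f.hom x.1) (C.d_comp_d i (i + 1) (i + 1 + 1))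
      simp only [ModuleCat.hom_comp, LinearMap.comp_apply, ModuleCat.hom_zero,
        LinearMap.zero_apply] at h
      simpa [LinearMap.restrict_coe_apply] using h)

/-- The inclusion of a subcomplex into the ambient complex. -/
noncomputable def subcomplexIncl (C : CochainComplex (ModuleCat R) ℤ)
    (F : ∀ i : ℤ, Submodule R (C.X i)) (hF : dStable C F) :
    subcomplex C F hF ⟶ C where
  f i := ModuleCat.ofHom (F i).subtype
  comm' := by
    rintro i j (rfl : i + 1 = j)
    ext x
    simp only [subcomplex, CochainComplex.of_d]
    rfl

/-- The quotient complex `F/G` of two `d`-stable families of submodules; when `G ≤ F`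
this is the quotient of the subcomplex determined by `F` by the subcomplex determined
by `G`. -/
noncomputable def grQuot (C : CochainComplex (ModuleCat R) ℤ)
    (F G : ∀ i : ℤ, Submodule R (C.X i)) (hF : dStable C F) (hG : dStable C G) :
    CochainComplex (ModuleCat R) ℤ :=
  CochainComplex.of
    (fun i => ModuleCat.of R ((F i) ⧸ ((G i).comap (F i).subtype)))
    (fun i => ModuleCat.ofHom (Submodule.mapQ _ _
      ((C.d i (i + 1)).hom.restrict (fun x hx => hF i (i + 1) x hx))
      (fun x hx => by
        simpa [Submodule.mem_comap, LinearMap.restrict_apply] using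
          hG i (i + 1) x.1 hx)))
    (fun i => by
      ext y
      have h := congrArg (fun f => f.hom y.1) (C.d_comp_d i (i + 1) (i + 1 + 1))
      simp only [ModuleCat.hom_comp, LinearMap.comp_apply, ModuleCat.hom_zero,
        LinearMap.zero_apply] at h
      simp [Submodule.mapQ_apply, Submodule.Quotient.mk_eq_zero, Submodule.mem_comap,
        LinearMap.restrict_apply, h])


lemma quasiIso_of_moduleCat {S₁ S₂ : ShortComplex (ModuleCat R)} (φ : S₁ ⟶ S₂)
    (hsurj : ∀ x₂ : S₂.X₂, S₂.g x₂ = 0 →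
      ∃ (y : S₁.X₂) (z : S₂.X₁), S₁.g y = 0 ∧ x₂ = φ.τ₂ y + S₂.f z)
    (hinj : ∀ y : S₁.X₂, S₁.g y = 0 → (∃ z, S₂.f z = φ.τ₂ y) → ∃ w, S₁.f w = y) :
    ShortComplex.QuasiIso φ := by
  have hK : ∀ x ∈ LinearMap.ker S₁.g.hom, φ.τ₂.hom x ∈ LinearMap.ker S₂.g.hom := by
    intro x hx
    have h := congrArg (fun f => f.hom x) φ.comm₂₃
    simp only [ModuleCat.hom_comp, LinearMap.comp_apply] at h
    simp only [LinearMap.mem_ker] at hx ⊢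
    rw [h, hx, map_zero]
  have h12 : ∀ a : S₁.X₁, S₂.f (φ.τ₁ a) = φ.τ₂ (S₁.f a) := by
    intro a
    have h := congrArg (fun f => f.hom a) φ.comm₁₂
    simp only [ModuleCat.hom_comp, LinearMap.comp_apply] at h
    exact h
  set φK : ModuleCat.of R (LinearMap.ker S₁.g.hom) ⟶ ModuleCat.of R (LinearMap.ker S₂.g.hom) :=
    ModuleCat.ofHom ((φ.τ₂.hom).restrict hK) with hφK
  have hrange : ∀ x ∈ LinearMap.range S₁.moduleCatToCycles,
      φK x ∈ LinearMap.range S₂.moduleCatToCycles := by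
    rintro x ⟨a, rfl⟩
    refine ⟨φ.τ₁ a, Subtype.ext ?_⟩
    show S₂.f (φ.τ₁ a) = φ.τ₂ (S₁.f a)
    exact h12 a
  set φH : S₁.moduleCatLeftHomologyData.H ⟶ S₂.moduleCatLeftHomologyData.H :=
    ModuleCat.ofHom (Submodule.mapQ (LinearMap.range S₁.moduleCatToCycles)
      (LinearMap.range S₂.moduleCatToCycles) φK.hom hrange) with hφH
  let γ : ShortComplex.LeftHomologyMapData φ S₁.moduleCatLeftHomologyData
      S₂.moduleCatLeftHomologyData :=
    { φK := φK
      φH := φH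
      commi := by ext x; rfl
      commf' := by
        ext x
        refine Subtype.ext ?_
        show φ.τ₂ (S₁.f x) = S₂.f (φ.τ₁ x)
        exact (h12 x).symm
      commπ := by ext x; rfl }
  have hbij : Function.Bijective (Submodule.mapQ (LinearMap.range S₁.moduleCatToCycles)
      (LinearMap.range S₂.moduleCatToCycles) φK.hom hrange) := by
    constructor
    · rw [injective_iff_map_eq_zero]
      intro a ha
      obtain ⟨y, rfl⟩ := Submodule.Quotient.mk_surjective _ a
      erw [Submodule.mapQ_apply] at ha
      rw [Submodule.Quotient.mk_eq_zero] at ha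
      obtain ⟨z, hz⟩ := ha
      obtain ⟨w, hw⟩ := hinj y.1 y.2 ⟨z, by
        have h := congrArg Subtype.val hz
        exact h⟩
      rw [Submodule.Quotient.mk_eq_zero]
      exact ⟨w, Subtype.ext hw⟩
    · intro q
      obtain ⟨x, rfl⟩ := Submodule.Quotient.mk_surjective _ q
      obtain ⟨y, z, hy, hxyz⟩ := hsurj x.1 x.2
      refine ⟨Submodule.Quotient.mk ⟨y, hy⟩, ?_⟩
      erw [Submodule.mapQ_apply]
      rw [Submodule.Quotient.eq]
      refine ⟨-z, Subtype.ext ?_⟩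
      show S₂.f (-z) = _
      rw [AddSubgroupClass.coe_sub, map_neg, hxyz]
      show -S₂.f z = φ.τ₂ y - (φ.τ₂ y + S₂.f z)
      abel
  have hiso : IsIso γ.φH := (ConcreteCategory.isIso_iff_bijective γ.φH).2 hbij
  rw [ShortComplex.quasiIso_iff, γ.homologyMap_eq]
  infer_instance

-- helper: the differential of the subcomplex, elementwise
lemma subcomplex_d_apply (C : CochainComplex (ModuleCat R) ℤ)
    (F : ∀ i : ℤ, Submodule R (C.X i)) (hF : dStable C F) (i j : ℤ)
    (x : (subcomplex C F hF).X i) :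
    (F j).subtype ((subcomplex C F hF).d i j x) = C.d i j ((F i).subtype x) := by
  have h := (subcomplexIncl C F hF).comm i j
  have h2 := congrArg (fun f => f.hom x) h
  simp only [ModuleCat.hom_comp, LinearMap.comp_apply] at h2
  exact h2.symm

/-- Let `C` be a cochain complex of `R`-modules with an ascending exhaustive filtration
`F_n C` (`n ∈ ℕ`) with `F_0 C = 0`, such that for every `n > 1` the quotient complex
`gr_n C = F_n C / F_{n-1} C` is acyclic.  Then the inclusion `F_1 C ↪ C` is a
quasi-isomorphism.  (No splitting hypothesis on the filtration is needed.) -/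
theorem incl_filtration_one_quasiIso
    (C : CochainComplex (ModuleCat R) ℤ)
    (F : ℕ → ∀ i : ℤ, Submodule R (C.X i))
    -- each `F n` is a subcomplex
    (hstab : ∀ n : ℕ, dStable C (F n))
    -- the filtration is ascending
    (hmono : ∀ (n : ℕ) (i : ℤ), F n i ≤ F (n + 1) i)
    -- the filtration is exhaustive
    (hexh : ∀ i : ℤ, (⨆ n : ℕ, F n i) = ⊤)
    -- `F 0 = 0`
    (hzero : ∀ i : ℤ, F 0 i = ⊥)
    -- for `n > 1`, the quotient complex `gr_n C = F_n C / F_{n-1} C` is acyclic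
    (hacyclic : ∀ n : ℕ, 1 < n → ∀ i : ℤ,
      (grQuot C (F n) (F (n - 1)) (hstab n) (hstab (n - 1))).ExactAt i) :
    QuasiIso (subcomplexIncl C (F 1) (hstab 1)) := by
  have hle : ∀ a b : ℕ, a ≤ b → ∀ i : ℤ, F a i ≤ F b i := fun a b hab i =>
    monotone_nat_of_le_succ (f := fun n => F n i) (fun n => hmono n i) hab
  have dd : ∀ (m : ℤ) (u : C.X m), C.d (m+1) (m+1+1) (C.d m (m+1) u) = 0 := by
    intro m u
    have h := congrArg (fun f => f.hom u) (C.d_comp_d m (m+1) (m+1+1))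
    simp only [ModuleCat.hom_comp, LinearMap.comp_apply, ModuleCat.hom_zero,
      LinearMap.zero_apply] at h
    exact h
  have hgr : ∀ (n : ℕ), 1 < n → ∀ (m : ℤ) (x : C.X (m+1)), x ∈ F n (m+1) →
      C.d (m+1) (m+1+1) x ∈ F (n-1) (m+1+1) →
      ∃ v ∈ F n m, x - C.d m (m+1) v ∈ F (n-1) (m+1) := by
    intro n hn m x hx hd
    have h := hacyclic n hn (m+1)
    rw [HomologicalComplex.exactAt_iff' _ m (m+1) (m+1+1)
      ((ComplexShape.up ℤ).prev_eq' rfl) ((ComplexShape.up ℤ).next_eq' rfl)] at h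
    rw [ShortComplex.moduleCat_exact_iff] at h
    obtain ⟨p, hp⟩ := h (Submodule.Quotient.mk (p := (F (n-1) (m+1)).comap (F n (m+1)).subtype) ⟨x, hx⟩) (by
      show (grQuot C (F n) (F (n-1)) (hstab n) (hstab (n-1))).d (m+1) (m+1+1)
        (Submodule.Quotient.mk (p := (F (n-1) (m+1)).comap (F n (m+1)).subtype) ⟨x, hx⟩) = 0
      simp only [grQuot, CochainComplex.of_d]
      change Submodule.Quotient.mk (p := (F (n-1) (m+1+1)).comap (F n (m+1+1)).subtype)
        ((C.d (m+1) (m+1+1)).hom.restrict (fun x hx => hstab n (m+1) (m+1+1) x hx) ⟨x, hx⟩) = 0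
      refine (Submodule.Quotient.mk_eq_zero _).2 ?_
      simpa [Submodule.mem_comap, LinearMap.restrict_apply] using hd)
    obtain ⟨w, rfl⟩ := Submodule.Quotient.mk_surjective _ p
    have hp' : (grQuot C (F n) (F (n-1)) (hstab n) (hstab (n-1))).d m (m+1)
        (Submodule.Quotient.mk w) = Submodule.Quotient.mk (p := (F (n-1) (m+1)).comap (F n (m+1)).subtype) ⟨x, hx⟩ := hp
    simp only [grQuot, CochainComplex.of_d] at hp'
    change Submodule.Quotient.mk (p := (F (n-1) (m+1)).comap (F n (m+1)).subtype)
      ((C.d m (m+1)).hom.restrict (fun x hx => hstab n m (m+1) x hx) w) = _ at hp'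
    rw [Submodule.Quotient.eq] at hp'
    refine ⟨w.1, w.2, ?_⟩
    have h2 : C.d m (m+1) w.1 - x ∈ F (n-1) (m+1) := by
      simpa [Submodule.mem_comap, LinearMap.restrict_apply,
        AddSubgroupClass.coe_sub] using hp'
    have h3 := neg_mem h2
    rw [neg_sub] at h3
    exact h3
  have hsurjcore : ∀ (m : ℤ) (n : ℕ) (x : C.X (m+1)), x ∈ F n (m+1) →
      C.d (m+1) (m+1+1) x = 0 →
      ∃ y z, y ∈ F 1 (m+1) ∧ C.d (m+1) (m+1+1) y = 0 ∧ x = y + C.d m (m+1) z := by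
    intro m n
    induction n with
    | zero =>
      intro x hx _
      rw [hzero, Submodule.mem_bot] at hx
      subst hx
      exact ⟨0, 0, zero_mem _, by simp, by simp⟩
    | succ n ih =>
      intro x hx hdx
      rcases Nat.eq_zero_or_pos n with h0 | h1
      · subst h0; exact ⟨x, 0, hx, hdx, by simp⟩
      · obtain ⟨v, hv, hv2⟩ := hgr (n+1) (by omega) m x hx (by rw [hdx]; exact zero_mem _)
        obtain ⟨y, z, hy1, hy2, hy3⟩ := ih (x - C.d m (m+1) v) hv2
          (by rw [map_sub, hdx, dd]; simp)
        refine ⟨y, z + v, hy1, hy2, ?_⟩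
        rw [map_add, ← add_assoc, ← hy3]
        abel
  have hinjcore : ∀ (i : ℤ) (n : ℕ) (y : C.X (i+1)), y ∈ F 1 (i+1) →
      ∀ z : C.X i, z ∈ F n i → C.d i (i+1) z = y → ∃ w ∈ F 1 i, C.d i (i+1) w = y := by
    intro i n
    induction n with
    | zero =>
      intro y _ z hz hdz
      rw [hzero, Submodule.mem_bot] at hz
      subst hz
      exact ⟨0, zero_mem _, hdz⟩
    | succ n ih =>
      intro y hy z hz hdz
      rcases Nat.eq_zero_or_pos n with h0 | h1
      · subst h0; exact ⟨z, hz, hdz⟩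
      · obtain ⟨m, rfl⟩ : ∃ m, i = m + 1 := ⟨i - 1, by omega⟩
        obtain ⟨v, hv, hv2⟩ := hgr (n+1) (by omega) m z hz (by rw [hdz]; exact hle 1 n h1 _ hy)
        exact ih y hy (z - C.d m (m+1) v) hv2 (by rw [map_sub, dd, sub_zero, hdz])
  refine ⟨fun j => ?_⟩
  obtain ⟨i, rfl⟩ : ∃ i, j = i + 1 := ⟨j - 1, by omega⟩
  rw [quasiIsoAt_iff' _ i (i+1) (i+1+1)
    ((ComplexShape.up ℤ).prev_eq' rfl) ((ComplexShape.up ℤ).next_eq' rfl)]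
  apply quasiIso_of_moduleCat
  · intro x hx
    have hxtop : x ∈ ⨆ n : ℕ, F n (i+1) := by rw [hexh]; trivial
    obtain ⟨n, hn⟩ := (Submodule.mem_iSup_of_directed _
      ((monotone_nat_of_le_succ (fun n => hmono n (i+1))).directed_le)).1 hxtop
    obtain ⟨y, z, hy1, hy2, hy3⟩ := hsurjcore i n x hn hx
    refine ⟨⟨y, hy1⟩, z, ?_, ?_⟩
    · refine Subtype.val_injective ?_
      show (F 1 (i+1+1)).subtype ((subcomplex C (F 1) (hstab 1)).d (i+1) (i+1+1) ⟨y, hy1⟩)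
        = (F 1 (i+1+1)).subtype 0
      rw [map_zero]
      exact (subcomplex_d_apply C (F 1) (hstab 1) _ _ ⟨y, hy1⟩).trans hy2
    · exact hy3
  · rintro y hy ⟨z, hz⟩
    obtain ⟨yv, hyv⟩ := y
    have hztop : z ∈ ⨆ n : ℕ, F n i := by rw [hexh]; trivial
    obtain ⟨n, hn⟩ := (Submodule.mem_iSup_of_directed _
      ((monotone_nat_of_le_succ (fun n => hmono n i)).directed_le)).1 hztop
    obtain ⟨w, hw1, hw2⟩ := hinjcore i n yv hyv z hn hz
    refine ⟨⟨w, hw1⟩, Subtype.val_injective ?_⟩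
    show (F 1 (i+1)).subtype ((subcomplex C (F 1) (hstab 1)).d i (i+1) ⟨w, hw1⟩)
      = (F 1 (i+1)).subtype ⟨yv, hyv⟩
    exact (subcomplex_d_apply C (F 1) (hstab 1) _ _ ⟨w, hw1⟩).trans hw2
end

section
/- Let C' and C'' be cochain complexes with differentials d' and d'', let e: C'' → C' be a degree 1 map satisfying d'∘e = −e∘d'', and let C be the complex with underlying graded module C' ⊕ C'' and differential given in matrix form by [[d', e],[0, d'']]. Suppose there are: a chain map p': C' → D, a chain map i: D → C' with p'∘i = id_D, and a degree −1 map h': C' → C' with id_{C'} = i∘p' + d'∘h' + h'∘d'; and a degree −1 map h'': C'' → C'' with id_{C''} = d''∘h'' + h''∘d''. Then p := (p', −p'∘e∘h''): C → D is a chain map satisfying p∘(i,0) = id_D, and setting h := [[h', −h'∘e∘h''],[0, h'']]: C → C one has id_C = (i,0)∘p + d_C∘h + h∘d_C. In particular the inclusion (i,0): D → C exhibits D as a deformation retract of C. -/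
open CategoryTheory

/-- Let `C'`, `C''` be cochain complexes, `e : C'' → C'` a degree `1` map with
`d' ∘ e = − e ∘ d''`, and let `C` be the complex with underlying graded module
`C' ⊕ C''` and differential `[[d', e], [0, d'']]`.  Given a chain map `p' : C' → D`,
a chain map `ι : D → C'` with `p' ∘ ι = id`, a homotopy `h'` with
`id = ι ∘ p' + d' ∘ h' + h' ∘ d'`, and a contracting homotopy `h''` of `C''`, then
`p := (p', − p' ∘ e ∘ h'') : C → D` is a chain map with `p ∘ (ι, 0) = id`, and with
`h := [[h', − h' ∘ e ∘ h''], [0, h'']]` one has `id_C = (ι,0) ∘ p + d_C ∘ h + h ∘ d_C`;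
in particular `(ι, 0) : D → C` exhibits `D` as a deformation retract of `C`. -/
theorem deformation_retract_of_extension_by_contractible
    {R : Type} [CommRing R]
    (C' C'' D : CochainComplex (ModuleCat R) ℤ)
    -- the degree 1 map `e` with `d' ∘ e = − e ∘ d''`
    (e : ∀ i j : ℤ, C''.X i →ₗ[R] C'.X j)
    (he : ∀ (i : ℤ) (x : C''.X i),
      C'.d (i + 1) (i + 2) (e i (i + 1) x) = - e (i + 1) (i + 2) (C''.d i (i + 1) x))
    -- the chain maps `p'`, `ι` with `p' ∘ ι = id_D`
    (p' : C' ⟶ D) (ι : D ⟶ C') (hpi : ι ≫ p' = 𝟙 D)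
    -- `h'` : `id_{C'} = ι ∘ p' + d' ∘ h' + h' ∘ d'`
    (h' : ∀ i j : ℤ, C'.X i →ₗ[R] C'.X j)
    (hh' : ∀ (n : ℤ) (x : C'.X n),
      x = ι.f n (p'.f n x) + C'.d (n - 1) n (h' n (n - 1) x)
        + h' (n + 1) n (C'.d n (n + 1) x))
    -- `h''` : a contracting homotopy of `C''`
    (h'' : ∀ i j : ℤ, C''.X i →ₗ[R] C''.X j)
    (hh'' : ∀ (n : ℤ) (x : C''.X n),
      x = C''.d (n - 1) n (h'' n (n - 1) x) + h'' (n + 1) n (C''.d n (n + 1) x)) :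
    -- (1) `p = (p', − p' ∘ e ∘ h'')` is a chain map `C → D`
    (∀ (n : ℤ) (a : C'.X n) (b : C''.X n),
      p'.f (n + 1) (C'.d n (n + 1) a + e n (n + 1) b)
          - p'.f (n + 1) (e n (n + 1) (h'' (n + 1) n (C''.d n (n + 1) b)))
        = D.d n (n + 1) (p'.f n a - p'.f n (e (n - 1) n (h'' n (n - 1) b))))
    ∧ -- (2) `p ∘ (ι, 0) = id_D`
    (∀ (n : ℤ) (x : D.X n),
      p'.f n (ι.f n x) - p'.f n (e (n - 1) n (h'' n (n - 1) (0 : C''.X n))) = x)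
    ∧ -- (3) first component of `id_C = (ι,0) ∘ p + d_C ∘ h + h ∘ d_C`
    (∀ (n : ℤ) (a : C'.X n) (b : C''.X n),
      a = ι.f n (p'.f n a - p'.f n (e (n - 1) n (h'' n (n - 1) b)))
        + (C'.d (n - 1) n (h' n (n - 1) a - h' n (n - 1) (e (n - 1) n (h'' n (n - 1) b)))
            + e (n - 1) n (h'' n (n - 1) b))
        + (h' (n + 1) n (C'.d n (n + 1) a + e n (n + 1) b)
            - h' (n + 1) n (e n (n + 1) (h'' (n + 1) n (C''.d n (n + 1) b)))))
    ∧ -- (4) second component of `id_C = (ι,0) ∘ p + d_C ∘ h + h ∘ d_C`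
    (∀ (n : ℤ) (b : C''.X n),
      b = C''.d (n - 1) n (h'' n (n - 1) b) + h'' (n + 1) n (C''.d n (n + 1) b)) := by
  have he' : ∀ (n : ℤ) (x : C''.X (n - 1)),
      C'.d n (n + 1) (e (n - 1) n x) = - e n (n + 1) (C''.d (n - 1) n x) := by
    intro n x
    have h := he (n - 1) x
    rw [show n - 1 + 1 = n from by ring, show n - 1 + 2 = n + 1 from by ring] at h
    exact h
  have hp : ∀ (n m : ℤ) (x : C'.X n), p'.f m (C'.d n m x) = D.d n m (p'.f n x) :=
    fun n m x => (ConcreteCategory.congr_hom (p'.comm n m) x).symm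
  refine ⟨?_, ?_, ?_, fun n b => hh'' n b⟩
  · -- (1)
    intro n a b
    have hb : e n (n + 1) b
        = e n (n + 1) (C''.d (n - 1) n (h'' n (n - 1) b))
          + e n (n + 1) (h'' (n + 1) n (C''.d n (n + 1) b)) := by
      conv_lhs => rw [hh'' n b]
      rw [map_add]
    rw [map_add, hb, map_sub, ← hp, ← hp, he' n (h'' n (n - 1) b), map_neg, map_add]
    abel
  · -- (2)
    intro n x
    have h2 := ConcreteCategory.congr_hom (congrArg (fun (f : D ⟶ D) => f.f n) hpi) x
    simp only [HomologicalComplex.comp_f, HomologicalComplex.id_f] at h2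
    simpa [map_zero] using h2
  · -- (3)
    intro n a b
    have hb : e n (n + 1) b
        = e n (n + 1) (C''.d (n - 1) n (h'' n (n - 1) b))
          + e n (n + 1) (h'' (n + 1) n (C''.d n (n + 1) b)) := by
      conv_lhs => rw [hh'' n b]
      rw [map_add]
    rw [map_add, hb, map_add, map_sub, map_sub]
    set F := h'' n (n - 1) b with hF
    set E := e (n - 1) n F with hEd
    have hE := hh' n E
    rw [he' n F, map_neg] at hE
    set u := ι.f n (p'.f n E)
    set v := C'.d (n - 1) n (h' n (n - 1) E)
    set w := h' (n + 1) n (e n (n + 1) (C''.d (n - 1) n F))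
    have hv : v = E - u + w := by rw [hE]; abel
    rw [hv]
    conv_lhs => rw [hh' n a]
    abel
end
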